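/- Let n ≥ 3 be an integer and m > 0. For r > r_h, let α(r), c(r) > 0 be the solutions of Bray's matching conditions α·c^{n−1} = φ_m(r)^{2(n−1)/(n−2)} r^{n−1} and α/c = φ_m(r)^{−n/(n−2)} (1 − m/(2 r^{n−2}))/r. Then there exist constants r₀ > r_h and K > 0 (depending only on n and m) such that for all r ≥ r₀ one has | α(r) − 1 + ((n−1)/n)·m·r^{2−n} | ≤ K·r^{4−2n}. (That is, α = 1 − ((n−1)/n) m / r^{n−2} + O(1/r^{2n−4}).) -/

import Mathlib

open Real


lemma bray_aux_taylor (β : ℝ) (hβ0 : 0 ≤ β) (hβ1 : β ≤ 1) (u : ℝ)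
    (hu0 : 0 ≤ u) (hu : u ≤ 1/2) :
    |((1-u)/(1+u)) ^ β - 1 + 2*β*u| ≤ 4*u^2 := by
  set g : ℝ → ℝ := fun t => ((1-t)/(1+t)) ^ β + 2*β*t with hg
  set g' : ℝ → ℝ := fun t => 2*β - 2*β*(((1-t)/(1+t)) ^ (β-1) / (1+t)^2) with hg'
  have key : ∀ t ∈ Set.Icc (0:ℝ) u, HasDerivAt g (g' t) t := by
    intro t ht
    obtain ⟨ht0, htu⟩ := ht
    have ht2 : t ≤ 1/2 := le_trans htu hu
    have h1t : (0:ℝ) < 1 - t := by linarith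
    have h1t' : (0:ℝ) < 1 + t := by linarith
    have hwpos : 0 < (1-t)/(1+t) := div_pos h1t h1t'
    have hd1 : HasDerivAt (fun s : ℝ => 1 - s) (-1) t := by
      simpa using (hasDerivAt_id t).const_sub 1
    have hd2 : HasDerivAt (fun s : ℝ => 1 + s) 1 t := by
      simpa using (hasDerivAt_id t).const_add 1
    have hw : HasDerivAt (fun s : ℝ => (1-s)/(1+s))
        ((-1*(1+t) - (1-t)*1)/(1+t)^2) t := hd1.div hd2 (ne_of_gt h1t')
    have hrpow := hw.rpow_const (p := β) (Or.inl (ne_of_gt hwpos))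
    have hlin : HasDerivAt (fun s : ℝ => 2*β*s) (2*β) t := by
      simpa using (hasDerivAt_id t).const_mul (2*β)
    have := hrpow.add hlin
    refine this.congr_deriv ?_
    have h1t'' : (1+t) ≠ 0 := ne_of_gt h1t'
    simp only [hg']
    ring
  have bound : ∀ t ∈ Set.Icc (0:ℝ) u, ‖g' t‖ ≤ 4*u := by
    intro t ht
    obtain ⟨ht0, htu⟩ := ht
    have ht2 : t ≤ 1/2 := le_trans htu hu
    have h1t : (0:ℝ) < 1 - t := by linarith
    have h1t' : (0:ℝ) < 1 + t := by linarith
    have hwpos : 0 < (1-t)/(1+t) := div_pos h1t h1t'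
    have hwle : (1-t)/(1+t) ≤ 1 := by
      rw [div_le_one h1t']; linarith
    set h : ℝ := ((1-t)/(1+t)) ^ (β-1) / (1+t)^2 with hh
    have hlow : 1 - 2*t ≤ h := by
      have h1 : (1:ℝ) ≤ ((1-t)/(1+t)) ^ (β-1) :=
        Real.one_le_rpow_of_pos_of_le_one_of_nonpos hwpos hwle (by linarith)
      have h2 : 1 - 2*t ≤ 1/(1+t)^2 := by
        rw [le_div_iff₀ (by positivity)]
        nlinarith [sq_nonneg t, mul_nonneg (mul_nonneg ht0 ht0) ht0]
      calc 1 - 2*t ≤ 1/(1+t)^2 := h2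
        _ ≤ h := by
          rw [hh]
          apply div_le_div_of_nonneg_right h1 -- maybe wrong name
          positivity
    have hup : h ≤ 1 + 2*t := by
      have h1 : ((1-t)/(1+t)) ^ (β-1) ≤ ((1-t)/(1+t)) ^ (-1:ℝ) :=
        Real.rpow_le_rpow_of_exponent_ge hwpos hwle (by linarith)
      have h2 : ((1-t)/(1+t)) ^ (-1:ℝ) = (1+t)/(1-t) := by
        rw [Real.rpow_neg_one, inv_div]
      have h3 : h ≤ ((1+t)/(1-t))/(1+t)^2 := by
        rw [hh]
        apply div_le_div_of_nonneg_right (h2 ▸ h1)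
        positivity
      calc h ≤ ((1+t)/(1-t))/(1+t)^2 := h3
        _ ≤ 1 + 2*t := by
          rw [div_le_iff₀ (by positivity), div_le_iff₀ h1t]
          nlinarith [mul_nonneg ht0 (sub_nonneg.2 ht2), mul_nonneg (mul_nonneg ht0 ht0) ht0, sq_nonneg t, mul_nonneg (mul_nonneg ht0 ht0) (sub_nonneg.2 ht2)]
    have : |g' t| ≤ 4*t := by
      have : g' t = 2*β*(1 - h) := by rw [hg']; ring
      rw [this, abs_mul]
      have hb : |2*β| = 2*β := abs_of_nonneg (by linarith)
      have h1h : |1 - h| ≤ 2*t := abs_le.2 ⟨by linarith, by linarith⟩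
      calc |2*β| * |1 - h| ≤ (2*1)*(2*t) := by
            apply mul_le_mul _ h1h (abs_nonneg _) (by norm_num)
            rw [hb]; linarith
        _ = 4*t := by ring
    calc ‖g' t‖ = |g' t| := rfl
      _ ≤ 4*t := this
      _ ≤ 4*u := by linarith
  have hmvt := (convex_Icc (0:ℝ) u).norm_image_sub_le_of_norm_hasDerivWithin_le
    (fun t ht => (key t ht).hasDerivWithinAt) bound
    (Set.left_mem_Icc.2 hu0) (Set.right_mem_Icc.2 hu0)
  have hg0 : g 0 = 1 := by simp [hg]
  have hgu : g u = ((1-u)/(1+u)) ^ β + 2*β*u := rfl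
  have : ‖g u - g 0‖ ≤ 4*u*‖u - 0‖ := hmvt
  rw [hg0, hgu, sub_zero] at this
  have hnu : ‖u‖ = u := abs_of_nonneg hu0
  have heq : ((1-u)/(1+u)) ^ β - 1 + 2*β*u = ((1-u)/(1+u)) ^ β + 2*β*u - 1 := by ring
  rw [heq, ← Real.norm_eq_abs]
  calc ‖((1-u)/(1+u)) ^ β + 2*β*u - 1‖ ≤ 4*u*‖u‖ := this
    _ = 4*u^2 := by rw [hnu]; ring

/-- Bray's matching conditions in the `n`-dimensional spatial Schwarzschild manifold of
mass `m > 0`: expansion of `α(r)`. -/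
theorem bray_alpha_expansion (n : ℕ) (hn : 3 ≤ n) (m : ℝ) (hm : 0 < m)
    (rh : ℝ) (hrh : rh = (m / 2) ^ ((1 : ℝ) / ((n : ℝ) - 2)))
    (α c : ℝ → ℝ)
    (hαpos : ∀ r, rh < r → 0 < α r)
    (hcpos : ∀ r, rh < r → 0 < c r)
    (harea : ∀ r, rh < r →
      α r * c r ^ ((n : ℝ) - 1) =
        (1 + m / (2 * r ^ ((n : ℝ) - 2))) ^ (2 * ((n : ℝ) - 1) / ((n : ℝ) - 2))
          * r ^ ((n : ℝ) - 1))
    (hmean : ∀ r, rh < r →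
      α r / c r =
        (1 + m / (2 * r ^ ((n : ℝ) - 2))) ^ (-(n : ℝ) / ((n : ℝ) - 2))
          * (1 - m / (2 * r ^ ((n : ℝ) - 2))) / r) :
    ∃ r₀ K : ℝ, rh < r₀ ∧ 0 < K ∧ ∀ r, r₀ ≤ r →
      |α r - 1 + ((n : ℝ) - 1) / (n : ℝ) * m * r ^ ((2 : ℝ) - (n : ℝ))|
        ≤ K * r ^ ((4 : ℝ) - 2 * (n : ℝ)) := by
  have hn3 : (3:ℝ) ≤ (n:ℝ) := by exact_mod_cast hn
  have hnpos : (0:ℝ) < n := by linarith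
  have hnne : ((n:ℝ)) ≠ 0 := ne_of_gt hnpos
  have he0 : (0:ℝ) < (n:ℝ) - 2 := by linarith
  have hne : ((n:ℝ) - 2) ≠ 0 := ne_of_gt he0
  have hm2 : (0:ℝ) < m/2 := by linarith
  have hrhpos : 0 < rh := by rw [hrh]; positivity
  have hrhe : rh ^ ((n:ℝ) - 2) = m/2 := by
    rw [hrh, ← Real.rpow_mul hm2.le, one_div_mul_cancel hne, Real.rpow_one]
  -- Step 1 : closed formula for α
  have halpha : ∀ r, rh < r → α r =
      ((1 - m/(2*r^((n:ℝ)-2)))/(1 + m/(2*r^((n:ℝ)-2)))) ^ (((n:ℝ)-1)/(n:ℝ)) := by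
    intro r hr
    have hrpos : 0 < r := hrhpos.trans hr
    have hrne : r ≠ 0 := ne_of_gt hrpos
    have hA := harea r hr
    have hB := hmean r hr
    have hα := hαpos r hr
    have hc := hcpos r hr
    set R := r ^ ((n:ℝ)-2) with hR
    have hRpos : 0 < R := Real.rpow_pos_of_pos hrpos _
    have hRgt : m/2 < R := by
      calc m/2 = rh ^ ((n:ℝ)-2) := hrhe.symm
        _ < R := Real.rpow_lt_rpow hrhpos.le hr he0
    set u := m/(2*R) with hu
    have hu0 : 0 < u := by positivity
    have hu1 : u < 1 := by
      rw [hu, div_lt_one (by positivity)]; linarith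
    have hφ : (0:ℝ) < 1 + u := by linarith
    have h1u : (0:ℝ) < 1 - u := by linarith
    have hcne : c r ^ ((n:ℝ)-1) ≠ 0 := ne_of_gt (Real.rpow_pos_of_pos hc _)
    have hrne' : r ^ ((n:ℝ)-1) ≠ 0 := ne_of_gt (Real.rpow_pos_of_pos hrpos _)
    have hsplit : (α r) ^ ((n:ℝ)) = α r * (α r) ^ ((n:ℝ)-1) := by
      rw [show ((n:ℝ)) = 1 + ((n:ℝ)-1) from by ring, Real.rpow_add hα, Real.rpow_one]
      norm_num
    have e1 : (α r) ^ ((n:ℝ)) = (α r * c r ^ ((n:ℝ)-1)) * (α r / c r) ^ ((n:ℝ)-1) := by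
      rw [Real.div_rpow hα.le hc.le, hsplit]
      field_simp
    have hexp : 2*((n:ℝ)-1)/((n:ℝ)-2) + (-(n:ℝ)/((n:ℝ)-2))*((n:ℝ)-1) = -((n:ℝ)-1) := by
      field_simp
      ring
    have hφcomb : (1+u)^(2*((n:ℝ)-1)/((n:ℝ)-2)) * (1+u)^((-(n:ℝ)/((n:ℝ)-2))*((n:ℝ)-1))
        = (1+u)^(-((n:ℝ)-1)) := by
      rw [← Real.rpow_add hφ, hexp]
    have e2 : (α r * c r ^ ((n:ℝ)-1)) * (α r / c r) ^ ((n:ℝ)-1)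
        = (1-u)^((n:ℝ)-1) / (1+u)^((n:ℝ)-1) := by
      rw [hA, hB]
      rw [Real.div_rpow (by positivity) hrpos.le,
        Real.mul_rpow (by positivity) h1u.le, ← Real.rpow_mul hφ.le]
      calc (1+u)^(2*((n:ℝ)-1)/((n:ℝ)-2)) * r^((n:ℝ)-1)
            * ((1+u)^((-(n:ℝ)/((n:ℝ)-2))*((n:ℝ)-1)) * (1-u)^((n:ℝ)-1) / r^((n:ℝ)-1))
          = ((1+u)^(2*((n:ℝ)-1)/((n:ℝ)-2)) * (1+u)^((-(n:ℝ)/((n:ℝ)-2))*((n:ℝ)-1)))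
            * (1-u)^((n:ℝ)-1) * (r^((n:ℝ)-1) / r^((n:ℝ)-1)) := by ring
        _ = (1+u)^(-((n:ℝ)-1)) * (1-u)^((n:ℝ)-1) * 1 := by rw [hφcomb, div_self hrne']
        _ = (1-u)^((n:ℝ)-1) / (1+u)^((n:ℝ)-1) := by
            rw [Real.rpow_neg hφ.le]; ring
    have key : (α r)^((n:ℝ)) = ((1-u)/(1+u))^((n:ℝ)-1) := by
      rw [e1, e2, Real.div_rpow h1u.le hφ.le]
    have e3 : α r = (((1-u)/(1+u))^((n:ℝ)-1))^(((n:ℝ))⁻¹) := by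
      calc α r = (α r) ^ ((n:ℝ) * ((n:ℝ))⁻¹) := by
            rw [mul_inv_cancel₀ hnne, Real.rpow_one]
        _ = ((α r)^((n:ℝ)))^(((n:ℝ))⁻¹) := by rw [Real.rpow_mul hα.le]
        _ = (((1-u)/(1+u))^((n:ℝ)-1))^(((n:ℝ))⁻¹) := by rw [key]
    rw [e3, ← Real.rpow_mul (div_nonneg h1u.le hφ.le), ← div_eq_mul_inv]
  -- Step 2 : assembly
  refine ⟨m ^ (((n:ℝ)-2)⁻¹) + rh, m^2, ?_, by positivity, ?_⟩
  · have : 0 < m ^ (((n:ℝ)-2)⁻¹) := Real.rpow_pos_of_pos hm _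
    linarith
  intro r hr₀
  have hmrp : 0 < m ^ (((n:ℝ)-2)⁻¹) := Real.rpow_pos_of_pos hm _
  have hr : rh < r := by linarith
  have hrpos : 0 < r := hrhpos.trans hr
  have hRpos : 0 < r ^ ((n:ℝ)-2) := Real.rpow_pos_of_pos hrpos _
  have hRge : m ≤ r ^ ((n:ℝ)-2) := by
    have h1 : m ^ (((n:ℝ)-2)⁻¹) ≤ r := by linarith
    calc m = (m ^ (((n:ℝ)-2)⁻¹)) ^ ((n:ℝ)-2) := by
          rw [← Real.rpow_mul hm.le, inv_mul_cancel₀ hne, Real.rpow_one]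
      _ ≤ r ^ ((n:ℝ)-2) := Real.rpow_le_rpow (le_of_lt hmrp) h1 he0.le
  set u := m/(2*r^((n:ℝ)-2)) with hu
  have hu0 : 0 < u := by positivity
  have huh : u ≤ 1/2 := by
    rw [hu, div_le_iff₀ (by positivity)]; linarith
  set β := ((n:ℝ)-1)/(n:ℝ) with hβ
  have hβ0 : 0 ≤ β := by rw [hβ]; exact div_nonneg (by linarith) hnpos.le
  have hβ1 : β ≤ 1 := by rw [hβ, div_le_one hnpos]; linarith
  have htay := bray_aux_taylor β hβ0 hβ1 u hu0.le huh
  have h1 : β * m * r^((2:ℝ)-(n:ℝ)) = 2*β*u := by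
    rw [show ((2:ℝ) - (n:ℝ)) = -((n:ℝ)-2) from by ring, Real.rpow_neg hrpos.le, hu]
    field_simp
  have h2 : m^2 * r^((4:ℝ)-2*(n:ℝ)) = 4*u^2 := by
    rw [show ((4:ℝ) - 2*(n:ℝ)) = ((n:ℝ)-2) * (-2) from by ring,
      Real.rpow_mul hrpos.le,
      show ((-2:ℝ)) = -((2:ℕ):ℝ) from by norm_num,
      Real.rpow_neg hRpos.le, Real.rpow_natCast, hu]
    field_simp
    ring
  rw [halpha r hr, h1, h2]
  exact htay
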